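/- In the signature-based model with X̂ a time-extended polynomial diffusion, the unconditional expectation of VIX squared is the deterministic quadratic form E[VIX²_T(ℓ)] = (1/Δ) ℓ^T Q^{cv}(T,Δ) ℓ, with Q^{cv}_{ℒ(I)ℒ(J)}(T,Δ) = vec((e_I ⧢ e_J) ⊗ e_0)^T (e^{(T+Δ)G^T} − e^{T G^T}) vec(𝕏̂_0^{2n+1}), where vec(𝕏̂_0^{2n+1}) = e_∅ and G is the (d+1)_{2n+1}-dimensional matrix representative of the dual operator corresponding to 𝕏̂. -/

import Mathlib

open MeasureTheory intervalIntegral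

/-- Words (multi-indices) over an alphabet of `d` letters. -/
abbrev Word (d : ℕ) := List (Fin d)

/-- The shuffle product of two words, as a multiset of words. -/
def shuffle {d : ℕ} : Word d → Word d → Multiset (Word d)
  | [], J => {J}
  | I, [] => {I}
  | i :: I, j :: J =>
      (shuffle I (j :: J)).map (i :: ·) + (shuffle (i :: I) J).map (j :: ·)
  termination_by I J => I.length + J.length

/-- Pairing of a linear functional on words with a formal sum of words. -/
def pairWith {d : ℕ} (f : Word d → ℝ) (m : Multiset (Word d)) : ℝ :=
  (m.map f).sum

/-- Coefficient of the word `K` in `e_I ⧢ u`, for a finitely supported `u ∈ T(ℝ^d)`. -/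
noncomputable def shufCoeff {d : ℕ} (I : Word d) (u : Word d →₀ ℝ) (K : Word d) : ℝ :=
  ∑ J ∈ u.support, u J * ((shuffle I J).count K : ℝ)

/-- The dual operator `L`:
`L e_∅ = 0`, `L e_I = e_{I'} ⧢ 𝐛_{i_{|I|}} + (1/2) e_{I''} ⧢ 𝐚_{i_{|I|-1} i_{|I|}}`
(coefficient of `e_K`), where `𝐛_j, 𝐚_{ij} ∈ T(ℝ^d)` encode drift and diffusion. -/
noncomputable def Lop {d : ℕ} (b : Fin d → Word d →₀ ℝ) (a : Fin d → Fin d → Word d →₀ ℝ)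
    (I : Word d) : Word d → ℝ :=
  match I.reverse with
  | [] => 0
  | [i] => shufCoeff ([] : Word d) (b i)
  | i :: j :: Irr => fun K =>
      shufCoeff (j :: Irr).reverse (b i) K + (1 / 2) * shufCoeff Irr.reverse (a j i) K


/-- **Unconditional expectation of VIX squared** (Section 5.3, control variates).
With `VIX²_T(ℓ) = (1/Δ) ℓᵀ Q(T,Δ) ℓ` (conditional closed form) and
`E[vec(𝕏̂^{2n+1}_T)] = e^{TGᵀ} vec(𝕏̂^{2n+1}_0)`, `vec(𝕏̂_0^{2n+1}) = e_∅`, the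
unconditional expectation is the deterministic quadratic form
`E[VIX²_T(ℓ)] = (1/Δ) ℓᵀ Q^{cv}(T,Δ) ℓ` with
`Q^{cv}_{ℒ(I)ℒ(J)} = vec((e_I⧢e_J)⊗e_0)ᵀ (e^{(T+Δ)Gᵀ} − e^{TGᵀ}) vec(𝕏̂_0^{2n+1})`. -/
theorem expected_vix_squared
    {d n : ℕ} {Ω : Type} [MeasurableSpace Ω] (μ : Measure Ω) [IsProbabilityMeasure μ]
    (sigX : Word (d + 1) → ℝ → Ω → ℝ)
    (𝒲n : Finset (Word (d + 1))) (h𝒲n : ∀ K : Word (d + 1), K ∈ 𝒲n ↔ K.length ≤ n)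
    (𝒲 : Finset (Word (d + 1))) (h𝒲 : ∀ K : Word (d + 1), K ∈ 𝒲 ↔ K.length ≤ 2 * n + 1)
    (G : Matrix 𝒲 𝒲 ℝ)
    (Δ T : ℝ) (hΔ : 0 < Δ) (hT : 0 ≤ T)
    (hint : ∀ I : 𝒲, Integrable (sigX I.1 T) μ)
    -- unconditional moment formula with vec(𝕏̂_0^{2n+1}) = e_∅:
    (hmoment0 : ∀ I : 𝒲, ∫ ω, sigX I.1 T ω ∂μ
      = ∑ J : 𝒲, NormedSpace.exp (T • G.transpose) I J * (if J.1 = [] then (1:ℝ) else 0))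
    (ℓ : Word (d + 1) → ℝ) :
    ∫ ω, (1 / Δ) * (∑ I ∈ 𝒲n, ∑ J ∈ 𝒲n, ℓ I * ℓ J *
        ∑ K : 𝒲, ∑ H : 𝒲, (((shuffle I J).map (· ++ [0])).count K.1 : ℝ) *
          ((NormedSpace.exp (Δ • G.transpose) - 1) K H) * sigX H.1 T ω) ∂μ
      = (1 / Δ) * ∑ I ∈ 𝒲n, ∑ J ∈ 𝒲n, ℓ I * ℓ J *
          ∑ K : 𝒲, ∑ H : 𝒲, (((shuffle I J).map (· ++ [0])).count K.1 : ℝ) *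
            ((NormedSpace.exp ((T + Δ) • G.transpose)
                - NormedSpace.exp (T • G.transpose)) K H) *
            (if H.1 = [] then (1:ℝ) else 0) := by
  classical
  have he : ([] : Word (d+1)) ∈ 𝒲 := (h𝒲 []).2 (by simp)
  set e0 : {x // x ∈ 𝒲} := ⟨[], he⟩ with he0
  -- matrix exponential identity
  have hexp : NormedSpace.exp ((T + Δ) • G.transpose)
      = NormedSpace.exp (Δ • G.transpose) * NormedSpace.exp (T • G.transpose) := by
    have : (T + Δ) • G.transpose = Δ • G.transpose + T • G.transpose := by
      rw [add_smul]; exact add_comm _ _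
    rw [this]
    exact Matrix.exp_add_of_commute _ _
      (((Commute.refl G.transpose).smul_left Δ).smul_right T)
  -- simplify the delta sums
  have hδ : ∀ (M : Matrix 𝒲 𝒲 ℝ) (H : 𝒲),
      (∑ J : 𝒲, M H J * (if J.1 = [] then (1:ℝ) else 0)) = M H e0 := by
    intro M H
    rw [Finset.sum_eq_single e0]
    · simp [he0]
    · intro J _ hJ
      have : ¬ J.1 = [] := fun h => hJ (Subtype.ext h)
      simp [this]
    · simp
  have hmom : ∀ H : 𝒲, ∫ ω, sigX H.1 T ω ∂μ
      = NormedSpace.exp (T • G.transpose) H e0 := by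
    intro H; rw [hmoment0 H, hδ]
  rw [MeasureTheory.integral_const_mul]
  congr 1
  rw [MeasureTheory.integral_finset_sum]
  swap
  · intro I _
    apply integrable_finset_sum
    intro J _
    apply Integrable.const_mul
    apply integrable_finset_sum
    intro K _
    apply integrable_finset_sum
    intro H _
    exact (hint H).const_mul _
  refine Finset.sum_congr rfl fun I _ => ?_
  rw [MeasureTheory.integral_finset_sum]
  swap
  · intro J _
    apply Integrable.const_mul
    apply integrable_finset_sum
    intro K _
    apply integrable_finset_sum
    intro H _
    exact (hint H).const_mul _
  refine Finset.sum_congr rfl fun J _ => ?_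
  rw [MeasureTheory.integral_const_mul]
  congr 1
  rw [MeasureTheory.integral_finset_sum]
  swap
  · intro K _
    apply integrable_finset_sum
    intro H _
    exact (hint H).const_mul _
  refine Finset.sum_congr rfl fun K _ => ?_
  rw [MeasureTheory.integral_finset_sum]
  swap
  · intro H _
    exact (hint H).const_mul _
  -- now reduce to matrix multiplication identity
  have : ∀ H : 𝒲, ∫ ω, (((shuffle I J).map (· ++ [0])).count K.1 : ℝ) *
      ((NormedSpace.exp (Δ • G.transpose) - 1) K H) * sigX H.1 T ω ∂μ
      = (((shuffle I J).map (· ++ [0])).count K.1 : ℝ) *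
        ((NormedSpace.exp (Δ • G.transpose) - 1) K H) *
        NormedSpace.exp (T • G.transpose) H e0 := by
    intro H
    rw [MeasureTheory.integral_const_mul, hmom]
  rw [Finset.sum_congr rfl fun H _ => this H]
  have hδ2 : (∑ H : 𝒲, (((shuffle I J).map (· ++ [0])).count K.1 : ℝ) *
      ((NormedSpace.exp ((T + Δ) • G.transpose)
        - NormedSpace.exp (T • G.transpose)) K H) *
      (if H.1 = [] then (1:ℝ) else 0))
      = (((shuffle I J).map (· ++ [0])).count K.1 : ℝ) *
        ((NormedSpace.exp ((T + Δ) • G.transpose)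
          - NormedSpace.exp (T • G.transpose)) K e0) := by
    rw [Finset.sum_eq_single e0]
    · simp [he0]
    · intro H _ hH
      have : ¬ H.1 = [] := fun h => hH (Subtype.ext h)
      simp [this]
    · simp
  rw [hδ2]
  have hmul : (NormedSpace.exp ((T + Δ) • G.transpose)
      - NormedSpace.exp (T • G.transpose)) K e0
      = ∑ H : 𝒲, (NormedSpace.exp (Δ • G.transpose) - 1) K H *
          NormedSpace.exp (T • G.transpose) H e0 := by
    have : NormedSpace.exp ((T + Δ) • G.transpose)
        - NormedSpace.exp (T • G.transpose)
        = (NormedSpace.exp (Δ • G.transpose) - 1) * NormedSpace.exp (T • G.transpose) := by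
      rw [sub_mul, one_mul, hexp]
    rw [this]
    simp [Matrix.mul_apply]
  rw [hmul, Finset.mul_sum]
  exact Finset.sum_congr rfl fun H _ => by ring
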